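/- (Bounded Palais–Smale sequences for monotone families, variant of Jeanjean's theorem) Let X be a real Banach space, I ⊂ (0,∞) a nonempty open interval, and for ρ ∈ I let G_ρ(u) = ρA(u) − B(u) with A, B : X → ℝ of class C¹, A ≥ 0, A ≢ 0, and either A(u) → ∞ or B(u) → ∞ as ‖u‖ → ∞. Suppose there are u₁, u₂ ∈ X such that, with Γ the set of continuous paths from u₁ to u₂, c(ρ) := inf_{ξ∈Γ} max_{t∈[0,1]} G_ρ(ξ(t)) > max{G_ρ(u₁), G_ρ(u₂)} for every ρ ∈ I. Then for almost every ρ ∈ I there exists a bounded sequence (u_n) ⊂ X with G_ρ(u_n) → c(ρ) and G'_ρ(u_n) → 0 in X*. -/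

import Mathlib

open MeasureTheory Filter Topology

noncomputable section

open Set

def PhiSup {X : Type*} [NormedAddCommGroup X] (G : X → ℝ)
    (η : C(↥(Set.Icc (0:ℝ) 1), X)) : ℝ :=
  sSup (Set.range fun t => G (η t))

theorem PhiSup_ge {X : Type*} [NormedAddCommGroup X] {G : X → ℝ} (hG : Continuous G)
    (η : C(↥(Set.Icc (0:ℝ) 1), X)) (t : ↥(Set.Icc (0:ℝ) 1)) :
    G (η t) ≤ PhiSup G η :=
  le_csSup (isCompact_range (hG.comp η.continuous)).bddAbove ⟨t, rfl⟩

theorem PhiSup_attained {X : Type*} [NormedAddCommGroup X] {G : X → ℝ} (hG : Continuous G)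
    (η : C(↥(Set.Icc (0:ℝ) 1), X)) :
    ∃ t, PhiSup G η = G (η t) := by
  have h := (isCompact_range (hG.comp η.continuous)).sSup_mem (Set.range_nonempty _)
  obtain ⟨t, ht⟩ := h
  exact ⟨t, ht.symm⟩

theorem PhiSup_le {X : Type*} [NormedAddCommGroup X] {G : X → ℝ}
    (η : C(↥(Set.Icc (0:ℝ) 1), X)) {b : ℝ} (hb : ∀ t, G (η t) ≤ b) :
    PhiSup G η ≤ b :=
  csSup_le (Set.range_nonempty _) (by rintro z ⟨t, rfl⟩; exact hb t)

theorem ekeland_aux {E : Type*} [MetricSpace E] [CompleteSpace E]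
    (Φ : E → ℝ) (hlsc : LowerSemicontinuous Φ) (m : ℝ) (hm : ∀ x, m ≤ Φ x)
    (x₀ : E) (ε a : ℝ) (hε : 0 < ε) (ha : 0 < a) (hx₀ : Φ x₀ ≤ m + ε) :
    ∃ γ : E, Φ γ ≤ Φ x₀ ∧ a * dist γ x₀ ≤ ε ∧ ∀ η, Φ γ ≤ Φ η + a * dist η γ := by
  -- the auxiliary order
  set S : E → Set E := fun y => {x | Φ x + a * dist x y ≤ Φ y} with hS
  have hySy : ∀ y, y ∈ S y := by
    intro y; simp [hS]
  have hSne : ∀ y, (Φ '' S y).Nonempty := fun y => ⟨Φ y, y, hySy y, rfl⟩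
  have hSbdd : ∀ y, BddBelow (Φ '' S y) := by
    intro y; exact ⟨m, by rintro z ⟨x, -, rfl⟩; exact hm x⟩
  -- choose the iteration
  have hstep : ∀ n : ℕ, ∀ y : E, ∃ x : E, x ∈ S y ∧ Φ x ≤ sInf (Φ '' S y) + (1/2)^n := by
    intro n y
    obtain ⟨z, ⟨x, hx, rfl⟩, hz⟩ := Real.lt_sInf_add_pos (hSne y) (by positivity :
      (0:ℝ) < (1/2)^n)
    exact ⟨x, hx, hz.le⟩
  choose f hf1 hf2 using hstep
  let x : ℕ → E := fun n => Nat.rec x₀ (fun n xn => f n xn) n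
  have hx0 : x 0 = x₀ := rfl
  have hxs : ∀ n, x (n+1) = f n (x n) := fun n => rfl
  have hmem : ∀ n, x (n+1) ∈ S (x n) := fun n => hf1 n (x n)
  have hinf : ∀ n, Φ (x (n+1)) ≤ sInf (Φ '' S (x n)) + (1/2)^n := fun n => hf2 n (x n)
  -- transitivity of membership
  have htrans : ∀ ⦃u v w : E⦄, u ∈ S v → v ∈ S w → u ∈ S w := by
    intro u v w huv hvw
    simp only [hS, Set.mem_setOf_eq] at *
    have := dist_triangle u v w
    nlinarith [dist_nonneg (x := u) (y := v)]
  have hmem' : ∀ m n, n ≤ m → x m ∈ S (x n) := by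
    intro m
    induction m with
    | zero => intro n hn; obtain rfl : n = 0 := Nat.le_zero.mp hn; exact hySy _
    | succ k ih =>
      intro n hn
      rcases Nat.lt_or_ge n (k+1) with h | h
      · exact htrans (hmem k) (ih n (Nat.lt_succ_iff.mp h))
      · obtain rfl : n = k + 1 := le_antisymm hn h
        exact hySy _
  -- key distance estimate from membership
  have hkey : ∀ ⦃u v : E⦄, u ∈ S v → a * dist u v ≤ Φ v - Φ u := by
    intro u v h
    simp only [hS, Set.mem_setOf_eq] at h
    linarith
  -- Φ (x n) is antitone
  have hΦanti : ∀ m n, n ≤ m → Φ (x m) ≤ Φ (x n) := by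
    intro m n h
    have := hkey (hmem' m n h)
    nlinarith [dist_nonneg (x := x m) (y := x n)]
  -- Cauchy
  have hcauchy : CauchySeq x := by
    apply cauchySeq_of_summable_dist
    have hsummand : ∀ n : ℕ, dist (x n) (x (n+1)) ≤ (Φ (x n) - Φ (x (n+1))) / a := by
      intro n
      rw [le_div_iff₀ ha, mul_comm]
      have := hkey (hmem n)
      rw [dist_comm] at this
      exact this
    apply Summable.of_nonneg_of_le (fun n => dist_nonneg) hsummand
    apply summable_of_sum_range_le (c := (Φ x₀ - m) / a)
    · intro n
      have := hΦanti (n+1) n (Nat.le_succ n)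
      have : 0 ≤ Φ (x n) - Φ (x (n+1)) := by linarith
      positivity
    · intro n
      rw [← Finset.sum_div]
      have hts : ∑ i ∈ Finset.range n, (Φ (x i) - Φ (x (i+1))) = Φ (x 0) - Φ (x n) :=
        Finset.sum_range_sub' (fun i => Φ (x i)) n
      rw [hts, hx0]
      have := hm (x n)
      exact div_le_div_of_nonneg_right (by linarith) ha.le
  obtain ⟨γ, hγ⟩ := cauchySeq_tendsto_of_complete hcauchy
  -- the limit of Φ (x n)
  have hΦbdd : ∀ n, m ≤ Φ (x n) := fun n => hm (x n)
  set L : ℝ := ⨅ n, Φ (x n) with hL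
  have hLanti : Antitone fun n => Φ (x n) := fun i j h => hΦanti j i h
  have hΦtend : Tendsto (fun n => Φ (x n)) atTop (𝓝 L) :=
    tendsto_atTop_ciInf hLanti ⟨m, by rintro z ⟨n, rfl⟩; exact hΦbdd n⟩
  have hLle : ∀ n, L ≤ Φ (x n) := fun n =>
    ciInf_le ⟨m, by rintro z ⟨k, rfl⟩; exact hΦbdd k⟩ n
  -- Φ γ ≤ L by lower semicontinuity
  have hΦγL : Φ γ ≤ L := by
    by_contra h
    push_neg at h
    have h1 : ∀ᶠ n in atTop, (L + Φ γ)/2 < Φ (x n) :=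
      hγ.eventually (hlsc γ ((L + Φ γ)/2) (by linarith))
    have h2 : ∀ᶠ n in atTop, Φ (x n) < (L + Φ γ)/2 :=
      hΦtend.eventually_lt_const (by linarith)
    obtain ⟨n, hn1, hn2⟩ := (h1.and h2).exists
    linarith
  -- γ ∈ S (x n) for every n
  have hγmem : ∀ n, γ ∈ S (x n) := by
    intro n
    have hd : a * dist γ (x n) ≤ Φ (x n) - L := by
      have htd : Tendsto (fun m : ℕ => a * dist (x m) (x n)) atTop
          (𝓝 (a * dist γ (x n))) :=
        tendsto_const_nhds.mul (hγ.dist tendsto_const_nhds)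
      refine le_of_tendsto htd ?_
      filter_upwards [eventually_ge_atTop n] with k hk
      have := hkey (hmem' k n hk)
      have := hLle k
      linarith
    simp only [hS, Set.mem_setOf_eq]
    linarith
  refine ⟨γ, ?_, ?_, ?_⟩
  · have h := hkey (hγmem 0)
    rw [hx0] at h
    nlinarith [dist_nonneg (x := γ) (y := x₀)]
  · have h0 := hkey (hγmem 0)
    rw [hx0] at h0
    have := hm γ
    linarith
  · intro η
    by_contra hcon
    push_neg at hcon
    have hηγ : η ∈ S γ := by simp only [hS, Set.mem_setOf_eq]; linarith
    have hηn : ∀ n, η ∈ S (x n) := fun n => htrans hηγ (hγmem n)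
    have hLη : L ≤ Φ η := by
      have hev : Tendsto (fun n : ℕ => Φ η + (1/2)^n) atTop (𝓝 (Φ η)) := by
        simpa using (tendsto_const_nhds (x := Φ η)).add
          (tendsto_pow_atTop_nhds_zero_of_lt_one (by norm_num) (by norm_num) :
            Tendsto (fun n : ℕ => (1/2 : ℝ)^n) atTop (𝓝 0))
      refine ge_of_tendsto hev ?_
      filter_upwards with n
      calc L ≤ Φ (x (n+1)) := hLle (n+1)
        _ ≤ sInf (Φ '' S (x n)) + (1/2)^n := hinf n
        _ ≤ Φ η + (1/2)^n := by
            have := csInf_le (hSbdd (x n)) ⟨η, hηn n, rfl⟩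
            linarith
    have hd0 : dist η γ ≤ 0 := by
      have h1 : Φ η + a * dist η γ ≤ Φ γ := hηγ
      nlinarith [hΦγL, hLη]
    have : η = γ := by
      rw [← dist_le_zero]; exact hd0
    rw [this] at hcon
    nlinarith [dist_nonneg (x := γ) (y := γ)]

set_option maxHeartbeats 2000000 in
/-- The deformation step: if along a near-optimal bounded path there is no
near-critical point, Ekeland's principle on the path space gives a contradiction. -/
theorem deform_contradiction {X : Type*} [NormedAddCommGroup X] [NormedSpace ℝ X]
    [CompleteSpace X]
    (G : X → ℝ) (G' : X → X →L[ℝ] ℝ) (hG : ∀ u, HasFDerivAt G (G' u) u)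
    (hG' : Continuous G') (u₁ u₂ : X) (cρ M δ h K : ℝ)
    (hδ : 0 < δ) (hδ1 : δ ≤ 1) (hh : 0 < h) (hh1 : h ≤ 1) (hK : 1 ≤ K)
    (hcrit : ∀ u : X, ‖u‖ ≤ M + 1 → |G u - cρ| ≤ δ → δ ≤ ‖G' u‖)
    (ξ : C(↥(Set.Icc (0:ℝ) 1), X))
    (hξ0 : ξ ⟨0, by norm_num⟩ = u₁) (hξ1 : ξ ⟨1, by norm_num⟩ = u₂)
    (hKh : K * h < δ^2/64) (hKh1 : K * h ≤ 1)
    (hmax : ∀ t, G (ξ t) ≤ cρ + K * h)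
    (hbdd : ∀ t, cρ - 2*h ≤ G (ξ t) → ‖ξ t‖ ≤ M)
    (hend1 : G u₁ ≤ cρ - 2*h) (hend2 : G u₂ ≤ cρ - 2*h)
    (hlow : ∀ η : C(↥(Set.Icc (0:ℝ) 1), X),
      η ⟨0, by norm_num⟩ = u₁ → η ⟨1, by norm_num⟩ = u₂ → cρ ≤ PhiSup G η) :
    False := by
  have hGc : Continuous G := by
    rw [continuous_iff_continuousAt]; exact fun u => (hG u).continuousAt
  -- the constrained path space
  set Es : Set C(↥(Set.Icc (0:ℝ) 1), X) :=
    {η | ∀ t, G (ξ t) ≤ cρ - 2*h → η t = ξ t} with hEs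
  have hξEs : ξ ∈ Es := fun t _ => rfl
  have hmemend : ∀ η ∈ Es, η ⟨0, by norm_num⟩ = u₁ ∧ η ⟨1, by norm_num⟩ = u₂ := by
    intro η hη
    constructor
    · rw [hη _ (by rw [hξ0]; exact hend1), hξ0]
    · rw [hη _ (by rw [hξ1]; exact hend2), hξ1]
  have hclosed : IsClosed Es := by
    have : Es = ⋂ t, {η : C(↥(Set.Icc (0:ℝ) 1), X) |
        G (ξ t) ≤ cρ - 2*h → η t = ξ t} := by
      ext η; simp [hEs, Set.mem_iInter]
    rw [this]
    refine isClosed_iInter fun t => ?_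
    by_cases hp : G (ξ t) ≤ cρ - 2*h
    · simp only [hp, forall_true_left]
      exact isClosed_eq (continuous_eval_const t) continuous_const
    · have : {η : C(↥(Set.Icc (0:ℝ) 1), X) | G (ξ t) ≤ cρ - 2*h → η t = ξ t} = Set.univ := by
        ext η; simp [hp]
      rw [this]; exact isClosed_univ
  haveI : CompleteSpace ↥Es := hclosed.completeSpace_coe
  haveI : Nonempty ↥Es := ⟨⟨ξ, hξEs⟩⟩
  set Φ : ↥Es → ℝ := fun η => PhiSup G η.1 with hΦ
  have hΦlow : ∀ η : ↥Es, cρ ≤ Φ η := fun η =>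
    hlow η.1 (hmemend η.1 η.2).1 (hmemend η.1 η.2).2
  have hΦlsc : LowerSemicontinuous Φ := by
    intro γ y hy
    obtain ⟨t₀, ht₀⟩ := PhiSup_attained hGc γ.1
    have hev : ContinuousAt (fun η : ↥Es => G (η.1 t₀)) γ := by
      exact (hGc.comp ((continuous_eval_const t₀).comp
        continuous_subtype_val)).continuousAt
    have : ∀ᶠ η : ↥Es in 𝓝 γ, y < G (η.1 t₀) := by
      have : Set.Ioi y ∈ 𝓝 (G (γ.1 t₀)) := isOpen_Ioi.mem_nhds (by rw [← ht₀]; exact hy)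
      exact hev this
    filter_upwards [this] with η hη
    exact lt_of_lt_of_le hη (PhiSup_ge hGc η.1 t₀)
  have hKh0 : 0 < K * h := by positivity
  have hsq : (0:ℝ) < Real.sqrt (K * h) := Real.sqrt_pos.mpr hKh0
  have hΦξ : Φ ⟨ξ, hξEs⟩ ≤ cρ + K * h := PhiSup_le ξ hmax
  obtain ⟨γhat, hγΦ, hγd, hγmin⟩ := ekeland_aux Φ hΦlsc cρ hΦlow ⟨ξ, hξEs⟩
    (K * h) (Real.sqrt (K * h)) hKh0 hsq hΦξ
  set γ : C(↥(Set.Icc (0:ℝ) 1), X) := γhat.1 with hγdef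
  have hγEs : γ ∈ Es := γhat.2
  have hdγξ : dist γ ξ ≤ Real.sqrt (K * h) := by
    have h1 : dist γ ξ = dist γhat (⟨ξ, hξEs⟩ : ↥Es) :=
      (Subtype.dist_eq γhat (⟨ξ, hξEs⟩ : ↥Es)).symm
    rw [h1]
    nlinarith [Real.mul_self_sqrt hKh0.le, hγd, hsq]
  have hdγξ1 : dist γ ξ ≤ 1 :=
    le_trans hdγξ (by rw [show (1:ℝ) = Real.sqrt 1 by simp]; exact Real.sqrt_le_sqrt hKh1)
  have hΦγlow : cρ ≤ PhiSup G γ := hΦlow γhat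
  have hΦγup : PhiSup G γ ≤ cρ + K * h := le_trans hγΦ hΦξ
  -- the high part of γ
  set S' : Set ↥(Set.Icc (0:ℝ) 1) := {t | cρ - h ≤ G (γ t)} with hS'def
  have hγξfrozen : ∀ t, G (ξ t) ≤ cρ - 2*h → γ t = ξ t := hγEs
  have hS'O : ∀ t ∈ S', cρ - 2*h < G (ξ t) := by
    intro t ht
    by_contra hcon
    push_neg at hcon
    have := hγξfrozen t hcon
    rw [hS'def, Set.mem_setOf_eq, this] at ht
    linarith
  have hS'bdd : ∀ t ∈ S', ‖γ t‖ ≤ M + 1 := by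
    intro t ht
    have h1 : ‖ξ t‖ ≤ M := hbdd t (hS'O t ht).le
    have h2 : dist (γ t) (ξ t) ≤ dist γ ξ := ContinuousMap.dist_apply_le_dist t
    have h3 : ‖γ t‖ ≤ ‖ξ t‖ + dist (γ t) (ξ t) := by
      rw [dist_eq_norm]
      have := norm_add_le (ξ t) (γ t - ξ t)
      simpa using this
    linarith
  have hδKh : K * h ≤ δ := by nlinarith
  have hhδ : h ≤ δ := by nlinarith
  have hS'crit : ∀ t ∈ S', δ ≤ ‖G' (γ t)‖ := by
    intro t ht
    refine hcrit (γ t) (hS'bdd t ht) ?_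
    rw [abs_le]
    have h1 : cρ - h ≤ G (γ t) := ht
    have h2 : G (γ t) ≤ cρ + K * h := le_trans (PhiSup_ge hGc γ t) hΦγup
    constructor <;> linarith
  -- choose descent directions with a safety margin
  have hchoice : ∀ t : ↥(Set.Icc (0:ℝ) 1), t ∈ S' → ∃ (v : X) (r : ℝ), ‖v‖ ≤ 1 ∧ 0 < r ∧
      ∀ y : X, ‖y - γ t‖ ≤ 2*r → δ/4 ≤ G' y v := by
    intro t ht
    have h1 : δ/2 < ‖G' (γ t)‖ := lt_of_lt_of_le (by linarith) (hS'crit t ht)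
    obtain ⟨v₀, hv₀, hv₀'⟩ := ContinuousLinearMap.exists_lt_apply_of_lt_opNorm
      (G' (γ t)) h1
    set v : X := if 0 ≤ G' (γ t) v₀ then v₀ else -v₀ with hv
    have hvnorm : ‖v‖ ≤ 1 := by
      rw [hv]; split <;> simpa using hv₀.le
    have hvval : δ/2 < G' (γ t) v := by
      rw [hv]
      rcases le_or_gt 0 (G' (γ t) v₀) with hsgn | hsgn
      · rw [if_pos hsgn]
        rwa [Real.norm_eq_abs, abs_of_nonneg hsgn] at hv₀'
      · rw [if_neg (not_le.mpr hsgn), map_neg]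
        rw [Real.norm_eq_abs, abs_of_neg hsgn] at hv₀'
        linarith
    -- continuity of G' at γ t
    have hcont := hG'.continuousAt (x := γ t)
    rw [Metric.continuousAt_iff] at hcont
    obtain ⟨r₀, hr₀, hr₀'⟩ := hcont (δ/4) (by positivity)
    refine ⟨v, r₀/3, hvnorm, by positivity, ?_⟩
    intro y hy
    have hd : dist y (γ t) < r₀ := by
      rw [dist_eq_norm]; linarith
    have h2 : ‖G' y - G' (γ t)‖ < δ/4 := by
      have := hr₀' hd
      rwa [dist_eq_norm] at this
    have h3 : |G' y v - G' (γ t) v| ≤ ‖G' y - G' (γ t)‖ := by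
      calc |G' y v - G' (γ t) v| = ‖(G' y - G' (γ t)) v‖ := by
            rw [ContinuousLinearMap.sub_apply]; rfl
        _ ≤ ‖G' y - G' (γ t)‖ * ‖v‖ := ContinuousLinearMap.le_opNorm _ _
        _ ≤ ‖G' y - G' (γ t)‖ * 1 := by
            apply mul_le_mul_of_nonneg_left hvnorm (norm_nonneg _)
        _ = ‖G' y - G' (γ t)‖ := mul_one _
    rw [abs_le] at h3
    linarith [h3.1]
  choose! v r hv1 hr0 hvr using hchoice
  -- finite subcover of the (compact) high part
  have hS'closed : IsClosed S' := by
    have : S' = (fun t => G (γ t)) ⁻¹' Set.Ici (cρ - h) := rfl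
    rw [this]
    exact IsClosed.preimage (hGc.comp γ.continuous) isClosed_Ici
  have hS'cpt : IsCompact S' := hS'closed.isCompact
  have hUopen : ∀ i ∈ S', IsOpen {s : ↥(Set.Icc (0:ℝ) 1) | ‖γ s - γ i‖ < r i} := by
    intro i _
    have : Continuous fun s : ↥(Set.Icc (0:ℝ) 1) => ‖γ s - γ i‖ :=
      (γ.continuous.sub continuous_const).norm
    exact isOpen_Iio.preimage this
  have hcover : S' ⊆ ⋃ i ∈ S', {s : ↥(Set.Icc (0:ℝ) 1) | ‖γ s - γ i‖ < r i} := by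
    intro t ht
    refine Set.mem_biUnion ht ?_
    simp only [Set.mem_setOf_eq, sub_self, norm_zero]
    exact hr0 t ht
  obtain ⟨b', hb'S, hb'fin, hb'cover⟩ :=
    hS'cpt.elim_finite_subcover_image hUopen hcover
  set bF : Finset ↥(Set.Icc (0:ℝ) 1) := hb'fin.toFinset with hbF
  have hbFS : ∀ i ∈ bF, i ∈ S' := by
    intro i hi
    exact hb'S (by simpa [hbF] using hi)
  -- partition functions
  set θ : ↥(Set.Icc (0:ℝ) 1) → ↥(Set.Icc (0:ℝ) 1) → ℝ :=
    fun i s => max 0 (r i - ‖γ s - γ i‖) with hθ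
  have hθnonneg : ∀ i s, 0 ≤ θ i s := fun i s => le_max_left _ _
  have hθpos : ∀ i s, 0 < θ i s → ‖γ s - γ i‖ < r i := by
    intro i s h
    rw [hθ] at h
    simp only [lt_max_iff, lt_self_iff_false, false_or, sub_pos] at h
    linarith [h]
  have hθcont : ∀ i, Continuous (θ i) := by
    intro i
    exact continuous_const.max (continuous_const.sub
      ((γ.continuous.sub continuous_const).norm))
  set D : ↥(Set.Icc (0:ℝ) 1) → ℝ := fun s => ∑ i ∈ bF, θ i s with hD
  have hDnonneg : ∀ s, 0 ≤ D s := fun s => Finset.sum_nonneg fun i _ => hθnonneg i s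
  have hDcont : Continuous D := continuous_finset_sum _ fun i _ => hθcont i
  have hDpos : ∀ t ∈ S', 0 < D t := by
    intro t ht
    obtain ⟨i, hi, hti⟩ := Set.mem_iUnion₂.mp (hb'cover ht)
    have hibF : i ∈ bF := by simpa [hbF] using hi
    refine Finset.sum_pos' (fun j _ => hθnonneg j t) ⟨i, hibF, ?_⟩
    rw [hθ]
    simp only [Set.mem_setOf_eq] at hti
    simp only [lt_max_iff]
    right; linarith
  -- the level cut-off function
  set χ : ↥(Set.Icc (0:ℝ) 1) → ℝ :=
    fun s => max 0 (min 1 (2/h * (G (γ s) - (cρ - h)))) with hχ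
  have hχnonneg : ∀ s, 0 ≤ χ s := fun s => le_max_left _ _
  have hχle1 : ∀ s, χ s ≤ 1 := by
    intro s
    rw [hχ]
    apply max_le (by norm_num) (min_le_left _ _)
  have hχcont : Continuous χ := by
    apply continuous_const.max (continuous_const.min _)
    exact continuous_const.mul ((hGc.comp γ.continuous).sub continuous_const)
  have hχzero : ∀ s, G (γ s) ≤ cρ - h → χ s = 0 := by
    intro s hs
    rw [hχ]
    have h1 : 2/h * (G (γ s) - (cρ - h)) ≤ 0 := by
      apply mul_nonpos_of_nonneg_of_nonpos (by positivity)
      linarith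
    have : min 1 (2/h * (G (γ s) - (cρ - h))) ≤ 0 := le_trans (min_le_right _ _) h1
    exact max_eq_left this
  have hχS' : ∀ s, 0 < χ s → s ∈ S' := by
    intro s hs
    by_contra hcon
    have : G (γ s) ≤ cρ - h := by
      simp only [hS'def, Set.mem_setOf_eq, not_le] at hcon
      exact hcon.le
    rw [hχzero s this] at hs
    exact lt_irrefl 0 hs
  have hχhalf : ∀ s, χ s ≤ 1/2 → G (γ s) ≤ cρ - 3*h/4 := by
    intro s hs
    by_contra hcon
    push_neg at hcon
    have hx : (1:ℝ)/2 < 2/h * (G (γ s) - (cρ - h)) := by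
      rw [div_mul_eq_mul_div, lt_div_iff₀ hh]
      linarith
    have : (1:ℝ)/2 < χ s := by
      rw [hχ]
      refine lt_of_lt_of_le ?_ (le_max_right _ _)
      exact lt_min (by norm_num) hx
    linarith
  -- the step size
  have hS'ne : S'.Nonempty := by
    obtain ⟨t₀, ht₀⟩ := PhiSup_attained hGc γ
    exact ⟨t₀, by rw [hS'def, Set.mem_setOf_eq, ← ht₀]; linarith⟩
  have hbFne : bF.Nonempty := by
    obtain ⟨t₀, ht₀⟩ := hS'ne
    obtain ⟨i, hi, -⟩ := Set.mem_iUnion₂.mp (hb'cover ht₀)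
    exact ⟨i, by simpa [hbF] using hi⟩
  set st : ℝ := min (bF.inf' hbFne r) h with hstdef
  have hstpos : 0 < st := by
    rw [hstdef]
    apply lt_min _ hh
    rw [Finset.lt_inf'_iff]
    exact fun i hi => hr0 i (hbFS i hi)
  have hstler : ∀ i ∈ bF, st ≤ r i := fun i hi =>
    le_trans (min_le_left _ _) (Finset.inf'_le r hi)
  have hsth : st ≤ h := min_le_right _ _
  -- the deformation field
  set W : ↥(Set.Icc (0:ℝ) 1) → X :=
    fun s => (-(χ s * (D s)⁻¹)) • (∑ i ∈ bF, θ i s • v i) with hW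
  have hsumnorm : ∀ s, ‖∑ i ∈ bF, θ i s • v i‖ ≤ D s := by
    intro s
    refine le_trans (norm_sum_le _ _) ?_
    rw [hD]
    apply Finset.sum_le_sum
    intro i hi
    rw [norm_smul, Real.norm_eq_abs, abs_of_nonneg (hθnonneg i s)]
    calc θ i s * ‖v i‖ ≤ θ i s * 1 :=
          mul_le_mul_of_nonneg_left (hv1 i (hbFS i hi)) (hθnonneg i s)
      _ = θ i s := mul_one _
  have hWnorm : ∀ s, ‖W s‖ ≤ χ s := by
    intro s
    rcases eq_or_lt_of_le (hDnonneg s) with hDs | hDs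
    · have hall : ∀ i ∈ bF, θ i s = 0 := by
        intro i hi
        have := (Finset.sum_eq_zero_iff_of_nonneg (fun j _ => hθnonneg j s)).mp hDs.symm
        exact this i hi
      have : (∑ i ∈ bF, θ i s • v i) = 0 :=
        Finset.sum_eq_zero fun i hi => by rw [hall i hi, zero_smul]
      rw [hW]
      simp only [this, smul_zero, norm_zero]
      exact hχnonneg s
    · rw [hW]
      simp only [norm_smul, Real.norm_eq_abs, abs_neg]
      rw [abs_of_nonneg (mul_nonneg (hχnonneg s) (inv_nonneg.mpr (hDnonneg s)))]
      calc χ s * (D s)⁻¹ * ‖∑ i ∈ bF, θ i s • v i‖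
          ≤ χ s * (D s)⁻¹ * D s := by
            apply mul_le_mul_of_nonneg_left (hsumnorm s)
            exact mul_nonneg (hχnonneg s) (inv_nonneg.mpr (hDnonneg s))
        _ = χ s := by field_simp
  have hWcont : Continuous W := by
    rw [continuous_iff_continuousAt]
    intro s₀
    by_cases hDs₀ : D s₀ = 0
    · have hχs₀ : χ s₀ = 0 := by
        by_contra hcon
        have : 0 < χ s₀ := lt_of_le_of_ne (hχnonneg s₀) (Ne.symm hcon)
        have := hDpos s₀ (hχS' s₀ this)
        rw [hDs₀] at this
        exact lt_irrefl 0 this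
      have hW0 : W s₀ = 0 := by
        rw [hW]
        simp [hχs₀]
      rw [ContinuousAt, hW0]
      apply squeeze_zero_norm hWnorm
      have := hχcont.continuousAt (x := s₀)
      rwa [ContinuousAt, hχs₀] at this
    · have hsum : Continuous fun s => ∑ i ∈ bF, θ i s • v i :=
        continuous_finset_sum _ fun i _ => (hθcont i).smul continuous_const
      have hcoef : ContinuousAt (fun s => -(χ s * (D s)⁻¹)) s₀ :=
        (hχcont.continuousAt.mul (hDcont.continuousAt.inv₀ hDs₀)).neg
      exact hcoef.smul hsum.continuousAt
  -- the deformed path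
  set η : C(↥(Set.Icc (0:ℝ) 1), X) :=
    ⟨fun s => γ s + st • W s, γ.continuous.add (continuous_const.smul hWcont)⟩ with hη
  have hηapp : ∀ s, η s = γ s + st • W s := fun s => rfl
  have hW0ofχ : ∀ s, χ s = 0 → W s = 0 := by
    intro s hs
    rw [hW]
    simp [hs]
  have hηEs : η ∈ Es := by
    intro t ht
    have hγt : γ t = ξ t := hγξfrozen t ht
    have hχt : χ t = 0 := by
      apply hχzero
      rw [hγt]
      linarith
    rw [hηapp, hW0ofχ t hχt, smul_zero, add_zero, hγt]
  have hdηγ : dist η γ ≤ st := by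
    rw [ContinuousMap.dist_le hstpos.le]
    intro s
    rw [hηapp, dist_eq_norm, add_sub_cancel_left, norm_smul, Real.norm_eq_abs,
      abs_of_nonneg hstpos.le]
    calc st * ‖W s‖ ≤ st * 1 :=
        mul_le_mul_of_nonneg_left (le_trans (hWnorm s) (hχle1 s)) hstpos.le
      _ = st := mul_one st
  -- the key descent estimate
  have hdesc : ∀ s, G (η s) ≤ G (γ s) - st * χ s * (δ/4) := by
    intro s
    by_cases hχs : χ s = 0
    · rw [hηapp, hW0ofχ s hχs, smul_zero, add_zero, hχs]
      simp
    · have hχpos' : 0 < χ s := lt_of_le_of_ne (hχnonneg s) (Ne.symm hχs)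
      have hsS' : s ∈ S' := hχS' s hχpos'
      have hDs : 0 < D s := hDpos s hsS'
      have hwn : ‖W s‖ ≤ 1 := le_trans (hWnorm s) (hχle1 s)
      have hgder : ∀ τ : ℝ, HasDerivAt (fun τ => G (γ s + τ • W s))
          (G' (γ s + τ • W s) (W s)) τ := by
        intro τ
        have h1 : HasDerivAt (fun τ : ℝ => γ s + τ • W s) (W s) τ := by
          simpa using ((hasDerivAt_id τ).smul_const (W s)).const_add (γ s)
        exact (hG (γ s + τ • W s)).comp_hasDerivAt τ h1
      obtain ⟨z, hz, hzeq⟩ := exists_hasDerivAt_eq_slope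
        (fun τ => G (γ s + τ • W s)) (fun τ => G' (γ s + τ • W s) (W s)) hstpos
        (Continuous.continuousOn (by
          exact hGc.comp (continuous_const.add (continuous_id.smul continuous_const))))
        (fun τ _ => hgder τ)
      set y : X := γ s + z • W s with hy
      have hyγ : ‖y - γ s‖ ≤ st := by
        rw [hy, add_sub_cancel_left, norm_smul, Real.norm_eq_abs]
        have hzb : |z| ≤ st := by
          rw [abs_of_nonneg hz.1.le]
          exact hz.2.le
        calc |z| * ‖W s‖ ≤ st * 1 :=
            mul_le_mul hzb hwn (norm_nonneg _) hstpos.le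
          _ = st := mul_one st
      have hyb : ∀ i ∈ bF, 0 < θ i s → δ/4 ≤ G' y (v i) := by
        intro i hi hθi
        apply hvr i (hbFS i hi)
        have h1 : ‖γ s - γ i‖ < r i := hθpos i s hθi
        calc ‖y - γ i‖ ≤ ‖y - γ s‖ + ‖γ s - γ i‖ := norm_sub_le_norm_sub_add_norm_sub _ _ _
          _ ≤ st + r i := add_le_add hyγ h1.le
          _ ≤ 2 * r i := by linarith [hstler i hi]
      have hsum : D s * (δ/4) ≤ ∑ i ∈ bF, θ i s * G' y (v i) := by
        rw [hD, Finset.sum_mul]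
        apply Finset.sum_le_sum
        intro i hi
        rcases eq_or_lt_of_le (hθnonneg i s) with h0 | h0
        · rw [← h0]; simp
        · exact mul_le_mul_of_nonneg_left (hyb i hi h0) (hθnonneg i s)
      have hGyW : G' y (W s) ≤ -(χ s) * (δ/4) := by
        have heq : G' y (W s) = (-(χ s * (D s)⁻¹)) * ∑ i ∈ bF, θ i s * G' y (v i) := by
          rw [hW, _root_.map_smul, map_sum, smul_eq_mul]
          congr 1
          apply Finset.sum_congr rfl
          intro i _
          rw [_root_.map_smul, smul_eq_mul]
        rw [heq]
        have hcoefnp : -(χ s * (D s)⁻¹) ≤ 0 :=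
          neg_nonpos.mpr (mul_nonneg (hχnonneg s) (inv_nonneg.mpr hDs.le))
        calc (-(χ s * (D s)⁻¹)) * ∑ i ∈ bF, θ i s * G' y (v i)
            ≤ (-(χ s * (D s)⁻¹)) * (D s * (δ/4)) :=
              mul_le_mul_of_nonpos_left hsum hcoefnp
          _ = -(χ s) * (δ/4) := by field_simp
      have hslope : (G (γ s + st • W s) - G (γ s + (0:ℝ) • W s)) / (st - 0) =
          G' y (W s) := hzeq.symm
      rw [zero_smul, add_zero, sub_zero] at hslope
      have := (div_le_iff₀ hstpos).mp (hslope.le.trans hGyW)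
      rw [hηapp]
      linarith [this]
  -- conclude via the Ekeland minimality
  have hΦη : PhiSup G η ≤ PhiSup G γ - st * δ/8 := by
    obtain ⟨t₀, ht₀⟩ := PhiSup_attained hGc η
    rw [ht₀]
    rcases le_or_gt (χ t₀) (1/2) with hcase | hcase
    · have h1 : G (γ t₀) ≤ cρ - 3*h/4 := hχhalf t₀ hcase
      have h2 : G (η t₀) ≤ G (γ t₀) := by
        have := hdesc t₀
        nlinarith [mul_nonneg (mul_nonneg hstpos.le (hχnonneg t₀)) (by positivity : (0:ℝ) ≤ δ/4)]
      have h3 : st * δ / 8 ≤ 3*h/4 := by nlinarith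
      linarith
    · have h1 := hdesc t₀
      have h2 : G (γ t₀) ≤ PhiSup G γ := PhiSup_ge hGc γ t₀
      have h3 : st * (1/2) * (δ/4) ≤ st * χ t₀ * (δ/4) := by
        apply mul_le_mul_of_nonneg_right _ (by positivity)
        exact mul_le_mul_of_nonneg_left hcase.le hstpos.le
      nlinarith
  have hmin := hγmin ⟨η, hηEs⟩
  have hdist : dist (⟨η, hηEs⟩ : ↥Es) γhat = dist η γ := Subtype.dist_eq _ _
  rw [hdist] at hmin
  have hfinal : st * δ/8 ≤ Real.sqrt (K*h) * st := by
    have h1 : PhiSup G γ ≤ PhiSup G η + Real.sqrt (K*h) * dist η γ := hmin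
    have h2 : Real.sqrt (K*h) * dist η γ ≤ Real.sqrt (K*h) * st :=
      mul_le_mul_of_nonneg_left hdηγ hsq.le
    linarith
  have hδsq : δ/8 ≤ Real.sqrt (K*h) := by
    have h2 : st * (δ/8) ≤ st * Real.sqrt (K*h) := by
      calc st * (δ/8) = st * δ/8 := by ring
        _ ≤ Real.sqrt (K*h) * st := hfinal
        _ = st * Real.sqrt (K*h) := mul_comm _ _
    exact (mul_le_mul_iff_right₀ hstpos).mp h2
  have : (δ/8)^2 ≤ K*h := by
    rw [← Real.sq_sqrt hKh0.le]
    exact pow_le_pow_left₀ (by positivity) hδsq 2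
  nlinarith


section PathSet

variable {X : Type*} [NormedAddCommGroup X] [NormedSpace ℝ X]

/-- The set of sup-levels of paths joining `u₁` to `u₂`. -/
def pathSet (A B : X → ℝ) (u₁ u₂ : X) (ρ : ℝ) : Set ℝ :=
  {m : ℝ | ∃ ξ : ℝ → X,
      ContinuousOn ξ (Set.Icc 0 1) ∧ ξ 0 = u₁ ∧ ξ 1 = u₂ ∧
      m = sSup ((fun t => ρ * A (ξ t) - B (ξ t)) '' Set.Icc (0 : ℝ) 1)}

variable {A B : X → ℝ} {u₁ u₂ : X} {ρ : ℝ}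

theorem pathSet_nonempty (hA : Continuous A) (hB : Continuous B) :
    (pathSet A B u₁ u₂ ρ).Nonempty := by
  refine ⟨_, fun t => u₁ + t • (u₂ - u₁), ?_, ?_, ?_, rfl⟩
  · exact (continuous_const.add (continuous_id.smul continuous_const)).continuousOn
  · simp
  · simp

/-- Rewrite the sup over the image as a `PhiSup` of a continuous map. -/
theorem sSup_image_eq_phiSup {ξ : ℝ → X} (hξ : ContinuousOn ξ (Set.Icc 0 1)) :
    sSup ((fun t => ρ * A (ξ t) - B (ξ t)) '' Set.Icc (0 : ℝ) 1) =
      PhiSup (fun u => ρ * A u - B u)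
        ⟨fun t : ↥(Set.Icc (0:ℝ) 1) => ξ t, hξ.restrict⟩ := by
  rw [PhiSup, Set.image_eq_range]
  rfl

theorem mem_pathSet_of_path (hA : Continuous A) (hB : Continuous B)
    (η : C(↥(Set.Icc (0:ℝ) 1), X))
    (hη0 : η ⟨0, by norm_num⟩ = u₁) (hη1 : η ⟨1, by norm_num⟩ = u₂) :
    PhiSup (fun u => ρ * A u - B u) η ∈ pathSet A B u₁ u₂ ρ := by
  refine ⟨fun t => η (Set.projIcc 0 1 (by norm_num) t), ?_, ?_, ?_, ?_⟩
  · exact (η.continuous.comp (continuous_projIcc)).continuousOn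
  · show η (Set.projIcc 0 1 (by norm_num) 0) = u₁
    rw [Set.projIcc_left]; exact hη0
  · show η (Set.projIcc 0 1 (by norm_num) 1) = u₂
    rw [Set.projIcc_right]; exact hη1
  · rw [Set.image_eq_range]
    rw [PhiSup]
    congr 1
    apply congrArg
    funext t
    show ρ * A (η t) - B (η t) = ρ * A (η (Set.projIcc 0 1 (by norm_num) ↑t)) -
        B (η (Set.projIcc 0 1 (by norm_num) ↑t))
    rw [Set.projIcc_val]

theorem pathSet_lb (hA : Continuous A) (hB : Continuous B) :
    ∀ m ∈ pathSet A B u₁ u₂ ρ,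
      max (ρ * A u₁ - B u₁) (ρ * A u₂ - B u₂) ≤ m := by
  rintro m ⟨ξ, hξc, hξ0, hξ1, rfl⟩
  have hcont : ContinuousOn (fun t => ρ * A (ξ t) - B (ξ t)) (Set.Icc 0 1) :=
    ((continuous_const.mul hA).sub hB).comp_continuousOn hξc
  have hbdd : BddAbove ((fun t => ρ * A (ξ t) - B (ξ t)) '' Set.Icc (0 : ℝ) 1) :=
    (isCompact_Icc.image_of_continuousOn hcont).bddAbove
  apply max_le
  · have := le_csSup hbdd ⟨0, Set.mem_Icc.mpr (by norm_num), rfl⟩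
    simp only [hξ0] at this
    exact this
  · have := le_csSup hbdd ⟨1, Set.mem_Icc.mpr (by norm_num), rfl⟩
    simp only [hξ1] at this
    exact this

theorem pathSet_bddBelow (hA : Continuous A) (hB : Continuous B) :
    BddBelow (pathSet A B u₁ u₂ ρ) :=
  ⟨max (ρ * A u₁ - B u₁) (ρ * A u₂ - B u₂), fun m hm => pathSet_lb hA hB m hm⟩

theorem pathSet_sInf_mono (hA : Continuous A) (hB : Continuous B)
    (hApos : ∀ u, 0 ≤ A u) {ρ₁ ρ₂ : ℝ} (hρ : ρ₁ ≤ ρ₂) :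
    sInf (pathSet A B u₁ u₂ ρ₁) ≤ sInf (pathSet A B u₁ u₂ ρ₂) := by
  apply le_csInf (pathSet_nonempty hA hB)
  rintro m ⟨ξ, hξc, hξ0, hξ1, rfl⟩
  have hcont1 : ContinuousOn (fun t => ρ₁ * A (ξ t) - B (ξ t)) (Set.Icc 0 1) :=
    ((continuous_const.mul hA).sub hB).comp_continuousOn hξc
  have hbdd2 : BddAbove ((fun t => ρ₂ * A (ξ t) - B (ξ t)) '' Set.Icc (0 : ℝ) 1) :=
    (isCompact_Icc.image_of_continuousOn
      (((continuous_const.mul hA).sub hB).comp_continuousOn hξc)).bddAbove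
  have h1 : sInf (pathSet A B u₁ u₂ ρ₁) ≤
      sSup ((fun t => ρ₁ * A (ξ t) - B (ξ t)) '' Set.Icc (0 : ℝ) 1) :=
    csInf_le (pathSet_bddBelow hA hB) ⟨ξ, hξc, hξ0, hξ1, rfl⟩
  refine h1.trans ?_
  refine csSup_le ⟨_, ⟨0, Set.mem_Icc.mpr (by norm_num), rfl⟩⟩ ?_
  rintro z ⟨t, ht, rfl⟩
  refine le_trans ?_ (le_csSup hbdd2 ⟨t, ht, rfl⟩)
  show ρ₁ * A (ξ t) - B (ξ t) ≤ ρ₂ * A (ξ t) - B (ξ t)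
  have := hApos (ξ t)
  nlinarith

end PathSet

open MeasureTheory

set_option maxHeartbeats 1000000 in

/-- **bounded Palais–Smale sequences for monotone families, a variant of
Jeanjean's theorem.** Let `X` be a real Banach space, `I ⊂ (0,∞)` a nonempty open
interval, `G_ρ = ρA − B` with `A, B ∈ C¹(X;ℝ)`, `A ≥ 0`, `A ≢ 0`, and `A` or `B`
coercive. If `G_ρ` has uniform mountain pass geometry on `I` with mountain pass level
`c(ρ)`, then for almost every `ρ ∈ I` the functional `G_ρ` admits a bounded
Palais–Smale sequence at level `c(ρ)`. -/
theorem statement18 {X : Type*} [NormedAddCommGroup X] [NormedSpace ℝ X]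
    [CompleteSpace X]
    (I : Set ℝ) (hIopen : IsOpen I) (hIne : I.Nonempty) (hIpos : I ⊆ Set.Ioi (0 : ℝ))
    (hIconn : I.OrdConnected)
    (A B : X → ℝ) (A' B' : X → X →L[ℝ] ℝ)
    (hA : ∀ u, HasFDerivAt A (A' u) u) (hA' : Continuous A')
    (hB : ∀ u, HasFDerivAt B (B' u) u) (hB' : Continuous B')
    (hApos : ∀ u, 0 ≤ A u) (hAne : ∃ u, A u ≠ 0)
    (hcoercive : (∀ M : ℝ, ∃ R : ℝ, ∀ u : X, R ≤ ‖u‖ → M ≤ A u) ∨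
                 (∀ M : ℝ, ∃ R : ℝ, ∀ u : X, R ≤ ‖u‖ → M ≤ B u))
    (u₁ u₂ : X) (c : ℝ → ℝ)
    -- `c(ρ)` is the mountain pass level over paths from `u₁` to `u₂`
    (hc : ∀ ρ : ℝ, c ρ = sInf {m : ℝ | ∃ ξ : ℝ → X,
        ContinuousOn ξ (Set.Icc 0 1) ∧ ξ 0 = u₁ ∧ ξ 1 = u₂ ∧
        m = sSup ((fun t => ρ * A (ξ t) - B (ξ t)) '' Set.Icc (0 : ℝ) 1)})
    -- mountain pass geometry on all of `I`
    (hmp : ∀ ρ ∈ I, max (ρ * A u₁ - B u₁) (ρ * A u₂ - B u₂) < c ρ) :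
    -- for almost every `ρ ∈ I`, a bounded Palais–Smale sequence at level `c(ρ)`
    ∀ᵐ ρ ∂((volume : Measure ℝ).restrict I),
      ∃ u : ℕ → X,
        (∃ M : ℝ, ∀ n, ‖u n‖ ≤ M) ∧
        Tendsto (fun n => ρ * A (u n) - B (u n)) atTop (𝓝 (c ρ)) ∧
        Tendsto (fun n => ‖ρ • A' (u n) - B' (u n)‖) atTop (𝓝 0) := by

  classical
  have hAc : Continuous A := by
    rw [continuous_iff_continuousAt]; exact fun u => (hA u).continuousAt
  have hBc : Continuous B := by
    rw [continuous_iff_continuousAt]; exact fun u => (hB u).continuousAt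
  have hc' : ∀ ρ : ℝ, c ρ = sInf (pathSet A B u₁ u₂ ρ) := hc
  have hmono : Monotone c := by
    intro ρ₁ ρ₂ hρ
    rw [hc' ρ₁, hc' ρ₂]
    exact pathSet_sInf_mono hAc hBc hApos hρ
  rw [ae_restrict_iff' hIopen.measurableSet]
  filter_upwards [hmono.ae_differentiableAt] with ρ hdiff hρI
  by_contra hcon
  -- notation
  set G : X → ℝ := fun u => ρ * A u - B u with hG
  set G' : X → X →L[ℝ] ℝ := fun u => ρ • A' u - B' u with hG'
  have hGder : ∀ u, HasFDerivAt G (G' u) u := by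
    intro u
    have h1 : HasFDerivAt (fun u => ρ * A u) (ρ • A' u) u := by
      exact (hA u).const_mul ρ
    exact h1.sub (hB u)
  have hGc : Continuous G := (continuous_const.mul hAc).sub hBc
  have hG'c : Continuous G' := (hA'.const_smul ρ).sub hB'
  -- derivative data
  have hder : HasDerivAt c (deriv c ρ) ρ := hdiff.hasDerivAt
  set d : ℝ := deriv c ρ with hd
  set K : ℝ := |d| + 2 with hK
  have hK1 : (1:ℝ) ≤ K := by
    have := abs_nonneg d
    rw [hK]; linarith
  have hKpos : (0:ℝ) < K := lt_of_lt_of_le one_pos hK1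
  -- the mountain pass gap
  set κ : ℝ := c ρ - max (ρ * A u₁ - B u₁) (ρ * A u₂ - B u₂) with hκ
  have hκpos : 0 < κ := by
    rw [hκ]; linarith [hmp ρ hρI]
  -- the uniform bound from coercivity
  set CB : ℝ := |ρ| * (K + 2) + |c ρ| + 2 with hCB
  have hMex : ∃ M : ℝ, 0 ≤ M ∧ ∀ u : X, A u ≤ K + 2 → B u ≤ CB → ‖u‖ ≤ M := by
    rcases hcoercive with hco | hco
    · obtain ⟨R, hR⟩ := hco (K + 3)
      refine ⟨max R 0, le_max_right _ _, ?_⟩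
      intro u hAu _
      by_contra hcon'
      push_neg at hcon'
      have : K + 3 ≤ A u := hR u (le_trans (le_max_left _ _) hcon'.le)
      linarith
    · obtain ⟨R, hR⟩ := hco (CB + 1)
      refine ⟨max R 0, le_max_right _ _, ?_⟩
      intro u _ hBu
      by_contra hcon'
      push_neg at hcon'
      have : CB + 1 ≤ B u := hR u (le_trans (le_max_left _ _) hcon'.le)
      linarith
  obtain ⟨M, hM0, hM⟩ := hMex
  -- no Palais-Smale sequence gives a uniform lower bound on the gradient
  have hδex : ∃ δ : ℝ, 0 < δ ∧ δ ≤ 1 ∧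
      ∀ u : X, ‖u‖ ≤ M + 1 → |G u - c ρ| ≤ δ → δ ≤ ‖G' u‖ := by
    by_contra hno
    push_neg at hno
    have hseq : ∀ n : ℕ, ∃ u : X, ‖u‖ ≤ M + 1 ∧ |G u - c ρ| ≤ 1/(n+1) ∧
        ‖G' u‖ < 1/(n+1) := by
      intro n
      obtain ⟨u, h1, h2, h3⟩ := hno (1/(n+1)) (by positivity)
        (by rw [div_le_one (by positivity)]; linarith [Nat.cast_nonneg (α := ℝ) n])
      exact ⟨u, h1, h2, h3⟩
    choose u hu1 hu2 hu3 using hseq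
    apply hcon
    refine ⟨u, ⟨M + 1, hu1⟩, ?_, ?_⟩
    · have h0 : Tendsto (fun n : ℕ => 1/((n:ℝ)+1)) atTop (𝓝 0) :=
        tendsto_one_div_add_atTop_nhds_zero_nat
      have h1 : Tendsto (fun n => G (u n) - c ρ) atTop (𝓝 0) := by
        apply squeeze_zero_norm _ h0
        intro n
        rw [Real.norm_eq_abs]
        exact hu2 n
      have := h1.add_const (c ρ)
      simpa using this
    · apply squeeze_zero_norm _ (tendsto_one_div_add_atTop_nhds_zero_nat)
      intro n
      rw [norm_norm]
      exact (hu3 n).le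
  obtain ⟨δ, hδpos, hδ1, hδ⟩ := hδex
  -- choose a good parameter slightly to the right of ρ
  have hhbar : (0:ℝ) < min 1 (min (κ/2) (δ^2/(65*K))) := by
    apply lt_min one_pos
    apply lt_min (by positivity) (by positivity)
  have hev1 : ∀ᶠ x in 𝓝[>] ρ, x ∈ I :=
    eventually_nhdsWithin_of_eventually_nhds (hIopen.eventually_mem hρI)
  have hev2 : ∀ᶠ x in 𝓝[>] ρ, c x ≤ c ρ + (|d|+1) * (x - ρ) := by
    have hslope : Tendsto (slope c ρ) (𝓝[>] ρ) (𝓝 d) :=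
      ((hasDerivAt_iff_tendsto_slope).mp hder).mono_left
        (nhdsWithin_mono ρ (fun x hx => ne_of_gt hx))
    have h1 : ∀ᶠ x in 𝓝[>] ρ, slope c ρ x < |d| + 1 :=
      hslope.eventually_lt_const (by cases abs_cases d <;> linarith)
    filter_upwards [h1, self_mem_nhdsWithin] with x hx hx'
    have hx'' : (0:ℝ) < x - ρ := sub_pos.mpr hx'
    rw [slope_def_field, div_lt_iff₀ hx''] at hx
    linarith
  have hev3 : ∀ᶠ x in 𝓝[>] ρ, x - ρ < min 1 (min (κ/2) (δ^2/(65*K))) := by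
    apply eventually_nhdsWithin_of_eventually_nhds
    have : ∀ᶠ x in 𝓝 ρ, x < ρ + min 1 (min (κ/2) (δ^2/(65*K))) :=
      Filter.Tendsto.eventually_lt_const (by linarith) tendsto_id
    filter_upwards [this] with x hx
    linarith
  obtain ⟨x, ⟨⟨⟨hxI, hxslope⟩, hxsmall⟩, hxρ⟩⟩ :=
    (((hev1.and hev2).and hev3).and self_mem_nhdsWithin).exists
  set h : ℝ := x - ρ with hhdef
  have hhpos : 0 < h := sub_pos.mpr hxρ
  have hmin1 : h < 1 := lt_of_lt_of_le hxsmall (min_le_left _ _)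
  have hh1 : h ≤ 1 := hmin1.le
  have hhκ : 2*h ≤ κ := by
    have := lt_of_lt_of_le hxsmall (le_trans (min_le_right _ _) (min_le_left _ _))
    linarith
  have hhδK : h < δ^2/(65*K) :=
    lt_of_lt_of_le hxsmall (le_trans (min_le_right _ _) (min_le_right _ _))
  have hKh : K * h < δ^2/64 := by
    have h1 : K * h < K * (δ^2/(65*K)) := by
      exact mul_lt_mul_of_pos_left hhδK hKpos
    have h2 : K * (δ^2/(65*K)) = δ^2/65 := by field_simp
    rw [h2] at h1
    have h3 : δ^2/65 < δ^2/64 := by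
      apply div_lt_div_of_pos_left (by positivity) (by norm_num) (by norm_num)
    linarith
  have hKh1 : K * h ≤ 1 := by nlinarith
  -- a near-optimal path for the parameter x
  obtain ⟨m, hm, hmlt⟩ := Real.lt_sInf_add_pos
    (pathSet_nonempty (A := A) (B := B) (u₁ := u₁) (u₂ := u₂) (ρ := x) hAc hBc)
    (show (0:ℝ) < h^2 by positivity)
  rw [← hc' x] at hmlt
  obtain ⟨ξ, hξcont, hξ0, hξ1, hmeq⟩ := hm
  set ξc : C(↥(Set.Icc (0:ℝ) 1), X) := ⟨fun t => ξ ↑t, hξcont.restrict⟩ with hξc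
  have hξc0 : ξc ⟨0, by norm_num⟩ = u₁ := hξ0
  have hξc1 : ξc ⟨1, by norm_num⟩ = u₂ := hξ1
  have hbddx : BddAbove ((fun t => x * A (ξ t) - B (ξ t)) '' Set.Icc (0:ℝ) 1) :=
    (isCompact_Icc.image_of_continuousOn
      (((continuous_const.mul hAc).sub hBc).comp_continuousOn hξcont)).bddAbove
  have hxub : ∀ t : ↥(Set.Icc (0:ℝ) 1), x * A (ξ ↑t) - B (ξ ↑t) ≤ m := by
    intro t
    rw [hmeq]
    exact le_csSup hbddx ⟨↑t, t.2, rfl⟩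
  have hxub' : ∀ t : ↥(Set.Icc (0:ℝ) 1), x * A (ξ ↑t) - B (ξ ↑t) ≤ c ρ + K * h := by
    intro t
    have h1 := hxub t
    have h2 : c x ≤ c ρ + (|d|+1) * h := hxslope
    have h3 : h^2 ≤ h := by nlinarith
    rw [hK]
    linarith
  have hGmax : ∀ t, G (ξc t) ≤ c ρ + K * h := by
    intro t
    have h1 : G (ξc t) = ρ * A (ξ ↑t) - B (ξ ↑t) := rfl
    have h2 : ρ * A (ξ ↑t) ≤ x * A (ξ ↑t) :=
      mul_le_mul_of_nonneg_right hxρ.le (hApos _)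
    have := hxub' t
    linarith
  have hGbdd : ∀ t, c ρ - 2*h ≤ G (ξc t) → ‖ξc t‖ ≤ M := by
    intro t ht
    have h1 : G (ξc t) = ρ * A (ξ ↑t) - B (ξ ↑t) := rfl
    have hAb : A (ξ ↑t) ≤ K + 2 := by
      have h2 : h * A (ξ ↑t) = (x * A (ξ ↑t) - B (ξ ↑t)) - (ρ * A (ξ ↑t) - B (ξ ↑t)) := by
        rw [hhdef]; ring
      have h3 : h * A (ξ ↑t) ≤ (K + 2) * h := by
        have := hxub' t
        rw [h2]
        rw [h1] at ht
        linarith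
      have := (mul_le_mul_iff_right₀ hhpos).mp (by linarith [h3] :
        h * A (ξ ↑t) ≤ h * (K + 2))
      exact this
    have hBb : B (ξ ↑t) ≤ CB := by
      have h2 : B (ξ ↑t) = ρ * A (ξ ↑t) - G (ξc t) := by rw [h1]; ring
      have h3 : ρ * A (ξ ↑t) ≤ |ρ| * (K + 2) := by
        calc ρ * A (ξ ↑t) ≤ |ρ| * A (ξ ↑t) :=
              mul_le_mul_of_nonneg_right (le_abs_self ρ) (hApos _)
          _ ≤ |ρ| * (K + 2) := mul_le_mul_of_nonneg_left hAb (abs_nonneg ρ)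
      have h4 : -(G (ξc t)) ≤ |c ρ| + 2 := by
        have : c ρ - 2*h ≤ G (ξc t) := ht
        have h5 : -(c ρ) ≤ |c ρ| := neg_le_abs (c ρ)
        linarith
      rw [hCB, h2]
      linarith
    exact hM _ hAb hBb
  have hend1 : G u₁ ≤ c ρ - 2*h := by
    have h1 : G u₁ ≤ max (ρ * A u₁ - B u₁) (ρ * A u₂ - B u₂) := le_max_left _ _
    rw [hκ] at hhκ
    linarith
  have hend2 : G u₂ ≤ c ρ - 2*h := by
    have h1 : G u₂ ≤ max (ρ * A u₁ - B u₁) (ρ * A u₂ - B u₂) := le_max_right _ _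
    rw [hκ] at hhκ
    linarith
  have hlow : ∀ η : C(↥(Set.Icc (0:ℝ) 1), X),
      η ⟨0, by norm_num⟩ = u₁ → η ⟨1, by norm_num⟩ = u₂ → c ρ ≤ PhiSup G η := by
    intro η h0 h1
    rw [hc' ρ]
    exact csInf_le (pathSet_bddBelow hAc hBc) (mem_pathSet_of_path hAc hBc η h0 h1)
  exact deform_contradiction G G' hGder hG'c u₁ u₂ (c ρ) M δ h K hδpos hδ1 hhpos hh1
    hK1 hδ ξc hξc0 hξc1 hKh hKh1 hGmax hGbdd hend1 hend2 hlow

end
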